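/- For the circle 𝕋 with total length 2π and n ≥ 1, the longest arc determined on 𝕋 by the set of directions { k/‖k‖₂ : k ∈ ℤ², max(|k₁|,|k₂|) = n } has arclength equal to arcsin(1/√(n²+1)), and arcsin(1/√(n²+1)) < 1/n. -/

import Mathlib

open Real Set

private lemma arctan_subadd {x y : ℝ} (hx : 0 ≤ x) (hy : 0 ≤ y) :
    Real.arctan (x + y) ≤ Real.arctan x + Real.arctan y := by
  rcases lt_or_ge (x * y) 1 with h | h
  · rw [Real.arctan_add h]
    apply Real.arctan_strictMono.monotone
    have h1 : 0 < 1 - x * y := by linarith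
    rw [le_div_iff₀ h1]
    nlinarith [mul_nonneg hx hy, add_nonneg hx hy]
  · have hx0 : 0 < x := by
      rcases hx.lt_or_eq with h' | h'
      · exact h'
      · exfalso; rw [← h'] at h; simp at h; linarith
    have hy0 : x⁻¹ ≤ y := by
      rw [inv_le_iff_one_le_mul₀ hx0]; nlinarith
    have h1 : Real.arctan x⁻¹ ≤ Real.arctan y := Real.arctan_strictMono.monotone hy0
    rw [Real.arctan_inv_of_pos hx0] at h1
    have h2 := Real.arctan_lt_pi_div_two (x + y)
    linarith

/-- cos/sin of arctan(b/a) for a > 0. -/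
private lemma cos_sin_arctan_div {a b : ℝ} (ha : 0 < a) :
    Real.cos (Real.arctan (b / a)) = a / Real.sqrt (a ^ 2 + b ^ 2) ∧
    Real.sin (Real.arctan (b / a)) = b / Real.sqrt (a ^ 2 + b ^ 2) := by
  have key : Real.sqrt (1 + (b / a) ^ 2) * a = Real.sqrt (a ^ 2 + b ^ 2) := by
    rw [← Real.sqrt_sq ha.le, ← Real.sqrt_mul (by positivity)]
    congr 1
    field_simp
    exact (Real.sq_sqrt (by positivity)).symm
  have hs : 0 < Real.sqrt (1 + (b / a) ^ 2) := Real.sqrt_pos.2 (by positivity)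
  constructor
  · rw [Real.cos_arctan, ← key, eq_div_iff (by positivity)]
    field_simp
  · rw [Real.sin_arctan, ← key, div_div, mul_comm]

/-- the set of angles of directions `k/‖k‖₂` of integer vectors `k` with
`|k|_max = n` cuts the circle into arcs, the longest of which has length exactly
`arcsin(1/√(n²+1))`, and `arcsin(1/√(n²+1)) < 1/n`. We formalize: (i) there is a gap of
length exactly `arcsin(1/√(n²+1))` between consecutive directions; (ii) any open interval
of angles avoiding all such directions has length at most `arcsin(1/√(n²+1))`;
(iii) `arcsin(1/√(n²+1)) < 1/n`. -/
theorem stmt_16 (n : ℕ) (hn : 1 ≤ n)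
    (D : Set ℝ)
    (hD : D = {θ : ℝ | ∃ k : ℤ × ℤ, max |k.1| |k.2| = (n : ℤ) ∧
      Real.cos θ = (k.1 : ℝ) / Real.sqrt ((k.1 : ℝ) ^ 2 + (k.2 : ℝ) ^ 2) ∧
      Real.sin θ = (k.2 : ℝ) / Real.sqrt ((k.1 : ℝ) ^ 2 + (k.2 : ℝ) ^ 2)}) :
    (∃ ψ₁ ψ₂ : ℝ, ψ₁ ∈ D ∧ ψ₂ ∈ D ∧
      ψ₂ - ψ₁ = Real.arcsin (1 / Real.sqrt ((n : ℝ) ^ 2 + 1)) ∧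
      ∀ ψ ∈ Set.Ioo ψ₁ ψ₂, ψ ∉ D) ∧
    (∀ a b : ℝ, Set.Ioo a b ∩ D = ∅ → b - a ≤ Real.arcsin (1 / Real.sqrt ((n : ℝ) ^ 2 + 1))) ∧
    Real.arcsin (1 / Real.sqrt ((n : ℝ) ^ 2 + 1)) < 1 / n := by
  have hn0 : (0 : ℝ) < n := by exact_mod_cast hn
  obtain ⟨g, hg⟩ : ∃ g : ℝ, g = Real.arctan (1 / n) := ⟨_, rfl⟩
  -- the arcsin value equals arctan (1/n)
  have harcsin : Real.arcsin (1 / Real.sqrt ((n : ℝ) ^ 2 + 1)) = g := by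
    rw [hg, Real.arctan_eq_arcsin]
    congr 1
    have key : Real.sqrt (1 + (1 / (n : ℝ)) ^ 2) * n = Real.sqrt ((n : ℝ) ^ 2 + 1) := by
      rw [← Real.sqrt_sq hn0.le, ← Real.sqrt_mul (by positivity)]
      congr 1
      field_simp
      exact (Real.sq_sqrt (by positivity)).symm
    rw [div_div, mul_comm, key]
  have hg_pos : 0 < g := by
    rw [hg, ← Real.arctan_zero]
    exact Real.arctan_strictMono (by positivity)
  have hg_le : g ≤ π / 4 := by
    rw [hg, ← Real.arctan_one]
    exact Real.arctan_strictMono.monotone (by rw [div_le_one hn0]; exact_mod_cast hn)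
  have hpi : 0 < π / 2 := by positivity
  have hpi4 : 0 < π / 4 := by positivity
  -- base directions: arctan (j / n) ∈ D for 0 ≤ j ≤ n (j : ℤ)
  have hbase : ∀ j : ℤ, 0 ≤ j → j ≤ (n : ℤ) → Real.arctan ((j : ℝ) / n) ∈ D := by
    intro j hj0 hjn
    rw [hD]
    refine ⟨((n : ℤ), j), ?_, ?_, ?_⟩
    · simp only
      rw [abs_of_nonneg hj0, abs_of_nonneg (by positivity : (0:ℤ) ≤ (n:ℤ))]
      omega
    · exact (cos_sin_arctan_div hn0).1
    · exact (cos_sin_arctan_div hn0).2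
  -- closure properties of D
  have hshift1 : ∀ θ ∈ D, θ + π / 2 ∈ D := by
    rw [hD]
    rintro θ ⟨⟨k1, k2⟩, hm, hc, hs⟩
    simp only at hm hc hs
    refine ⟨(-k2, k1), by simp only [abs_neg] at *; omega, ?_, ?_⟩
    · rw [Real.cos_add_pi_div_two, hs]
      push_cast
      rw [show (-(k2:ℝ)) ^ 2 + (k1:ℝ) ^ 2 = (k1:ℝ) ^ 2 + (k2:ℝ) ^ 2 from by ring, neg_div]
    · rw [Real.sin_add_pi_div_two, hc]
      push_cast
      rw [show (-(k2:ℝ)) ^ 2 + (k1:ℝ) ^ 2 = (k1:ℝ) ^ 2 + (k2:ℝ) ^ 2 from by ring]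
  have hshift1' : ∀ θ ∈ D, θ - π / 2 ∈ D := by
    rw [hD]
    rintro θ ⟨⟨k1, k2⟩, hm, hc, hs⟩
    simp only at hm hc hs
    refine ⟨(k2, -k1), by simp only [abs_neg] at *; omega, ?_, ?_⟩
    · rw [Real.cos_sub_pi_div_two, hs]
      push_cast
      rw [show (k2:ℝ) ^ 2 + (-(k1:ℝ)) ^ 2 = (k1:ℝ) ^ 2 + (k2:ℝ) ^ 2 from by ring]
    · rw [Real.sin_sub_pi_div_two, hc]
      push_cast
      rw [show (k2:ℝ) ^ 2 + (-(k1:ℝ)) ^ 2 = (k1:ℝ) ^ 2 + (k2:ℝ) ^ 2 from by ring, neg_div]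
  have hrefl : ∀ θ ∈ D, π / 2 - θ ∈ D := by
    rw [hD]
    rintro θ ⟨⟨k1, k2⟩, hm, hc, hs⟩
    simp only at hm hc hs
    refine ⟨(k2, k1), by simp only at *; omega, ?_, ?_⟩
    · rw [Real.cos_pi_div_two_sub, hs]
      push_cast
      rw [show (k2:ℝ) ^ 2 + (k1:ℝ) ^ 2 = (k1:ℝ) ^ 2 + (k2:ℝ) ^ 2 from by ring]
    · rw [Real.sin_pi_div_two_sub, hc]
      push_cast
      rw [show (k2:ℝ) ^ 2 + (k1:ℝ) ^ 2 = (k1:ℝ) ^ 2 + (k2:ℝ) ^ 2 from by ring]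
  have hshift : ∀ m : ℤ, ∀ θ ∈ D, θ + m * (π / 2) ∈ D := by
    intro m
    induction m using Int.induction_on with
    | zero => intro θ hθ; simpa using hθ
    | succ i ih =>
        intro θ hθ
        have h := hshift1 _ (ih θ hθ)
        have he : θ + ((i : ℤ) + 1 : ℤ) * (π / 2) = θ + (i : ℤ) * (π / 2) + π / 2 := by
          push_cast; ring
        rwa [he]
    | pred i ih =>
        intro θ hθ
        have h := hshift1' _ (ih θ hθ)
        have he : θ + (-(i : ℤ) - 1 : ℤ) * (π / 2) = θ + (-(i : ℤ) : ℤ) * (π / 2) - π / 2 := by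
          push_cast; ring
        rwa [he]
  -- covering lemma on a fundamental domain
  have key2 : ∀ θ : ℝ, 0 ≤ θ → θ < π / 2 → ∃ ψ ∈ D, θ ≤ ψ ∧ ψ ≤ θ + g := by
    intro θ hθ0 hθ1
    rcases le_or_gt θ (π / 4) with hcase | hcase
    · -- θ ∈ [0, π/4]
      obtain ⟨t, ht⟩ : ∃ t : ℝ, t = Real.tan θ := ⟨_, rfl⟩
      have ht0 : 0 ≤ t := ht ▸ Real.tan_nonneg_of_nonneg_of_le_pi_div_two hθ0 hθ1.le
      have ht1 : t ≤ 1 := by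
        rw [ht, ← Real.tan_pi_div_four]
        rcases hcase.lt_or_eq with h | h
        · exact (Real.tan_lt_tan_of_nonneg_of_lt_pi_div_two hθ0
            (by linarith [Real.pi_pos]) h).le
        · rw [h]
      have hat : Real.arctan t = θ := by
        rw [ht]; exact Real.arctan_tan (by linarith [Real.pi_pos]) hθ1
      obtain ⟨j, hj⟩ : ∃ j : ℤ, j = ⌈(n : ℝ) * t⌉ := ⟨_, rfl⟩
      have hj0 : 0 ≤ j := hj ▸ Int.ceil_nonneg (by positivity)
      have hjn : j ≤ (n : ℤ) := by
        rw [hj]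
        exact Int.ceil_le.2 (by push_cast; nlinarith)
      have hmem := hbase j hj0 hjn
      refine ⟨Real.arctan ((j : ℝ) / n), hmem, ?_, ?_⟩
      · rw [← hat]
        apply Real.arctan_strictMono.monotone
        rw [le_div_iff₀ hn0, mul_comm, hj]
        exact Int.le_ceil _
      · rcases hj0.lt_or_eq with hj1 | hj1
        · have hlt : ((j : ℝ) - 1) / n < t := by
            rw [div_lt_iff₀ hn0, mul_comm]
            have h := Int.ceil_lt_add_one ((n : ℝ) * t)
            rw [← hj] at h
            linarith
          have h1 : Real.arctan (((j : ℝ) - 1) / n) < θ := by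
            rw [← hat]
            exact Real.arctan_strictMono hlt
          have h2 : Real.arctan ((j : ℝ) / n) ≤
              Real.arctan (((j : ℝ) - 1) / n) + g := by
            have he : (j : ℝ) / n = ((j : ℝ) - 1) / n + 1 / n := by ring
            have hj1' : (1 : ℝ) ≤ (j : ℝ) := by exact_mod_cast hj1
            rw [he, hg]
            exact arctan_subadd (div_nonneg (by linarith) hn0.le) (by positivity)
          linarith
        · rw [← hj1]
          simp only [Int.cast_zero, zero_div, Real.arctan_zero]
          linarith
    · -- θ ∈ (π/4, π/2)
      obtain ⟨σ, hσ⟩ : ∃ σ : ℝ, σ = π / 2 - θ := ⟨_, rfl⟩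
      have hσ0 : 0 < σ := by rw [hσ]; linarith
      have hσ1 : σ < π / 4 := by rw [hσ]; linarith
      obtain ⟨t, ht⟩ : ∃ t : ℝ, t = Real.tan σ := ⟨_, rfl⟩
      have ht0 : 0 < t :=
        ht ▸ Real.tan_pos_of_pos_of_lt_pi_div_two hσ0 (by linarith [Real.pi_pos])
      have ht1 : t < 1 := by
        rw [ht, ← Real.tan_pi_div_four]
        exact Real.tan_lt_tan_of_nonneg_of_lt_pi_div_two hσ0.le (by linarith [Real.pi_pos]) hσ1
      have hat : Real.arctan t = σ := by
        rw [ht]; exact Real.arctan_tan (by linarith [Real.pi_pos]) (by linarith [Real.pi_pos])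
      obtain ⟨j, hj⟩ : ∃ j : ℤ, j = ⌊(n : ℝ) * t⌋ := ⟨_, rfl⟩
      have hj0 : 0 ≤ j := hj ▸ Int.floor_nonneg.2 (by positivity)
      have hjn : j ≤ (n : ℤ) := by
        have h1 : ((n : ℝ) * t) ≤ n := by nlinarith
        have h2 : ((j : ℝ)) ≤ n := by
          rw [hj]; exact (Int.floor_le ((n : ℝ) * t)).trans h1
        exact_mod_cast h2
      have hmem := hbase j hj0 hjn
      have hle : Real.arctan ((j : ℝ) / n) ≤ σ := by
        rw [← hat]
        apply Real.arctan_strictMono.monotone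
        rw [div_le_iff₀ hn0, mul_comm, hj]
        exact Int.floor_le _
      have hlt : σ < Real.arctan ((j : ℝ) / n) + g := by
        have hlt' : t < ((j : ℝ) + 1) / n := by
          rw [lt_div_iff₀ hn0, mul_comm, hj]
          exact Int.lt_floor_add_one _
        have h1 : σ < Real.arctan (((j : ℝ) + 1) / n) := by
          rw [← hat]; exact Real.arctan_strictMono hlt'
        have h2 : Real.arctan (((j : ℝ) + 1) / n) ≤ Real.arctan ((j : ℝ) / n) + g := by
          have he : ((j : ℝ) + 1) / n = (j : ℝ) / n + 1 / n := by ring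
          rw [he, hg]
          exact arctan_subadd (by positivity) (by positivity)
        linarith
      refine ⟨π / 2 - Real.arctan ((j : ℝ) / n), hrefl _ hmem, by rw [hσ] at hle; linarith,
        by rw [hσ] at hlt; linarith⟩
  -- covering lemma everywhere
  have hB : ∀ θ : ℝ, ∃ ψ ∈ D, θ ≤ ψ ∧ ψ ≤ θ + g := by
    intro θ
    obtain ⟨ψ', hψ'D, h1, h2⟩ := key2 (θ - ⌊θ / (π / 2)⌋ * (π / 2))
      (Int.sub_floor_div_mul_nonneg θ hpi) (Int.sub_floor_div_mul_lt θ hpi)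
    refine ⟨ψ' + ⌊θ / (π / 2)⌋ * (π / 2), hshift _ _ hψ'D, by linarith, by linarith⟩
  rw [harcsin]
  refine ⟨⟨0, g, ?_, ?_, by ring, ?_⟩, ?_, ?_⟩
  · -- 0 ∈ D
    have h := hbase 0 le_rfl (by exact_mod_cast Nat.zero_le n)
    simpa using h
  · -- g ∈ D
    have h := hbase 1 zero_le_one (by exact_mod_cast hn)
    simpa [hg] using h
  · -- no direction strictly between 0 and g
    rintro ψ ⟨hψ0, hψg⟩ hψD
    rw [hD] at hψD
    obtain ⟨⟨k1, k2⟩, hm, hc, hs⟩ := hψD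
    simp only at hm hc hs
    have hψlt : ψ < π / 2 := by linarith [Real.pi_pos, hg_le]
    have hsin : 0 < Real.sin ψ :=
      Real.sin_pos_of_pos_of_lt_pi hψ0 (by linarith [Real.pi_pos])
    have hcos : 0 < Real.cos ψ :=
      Real.cos_pos_of_mem_Ioo ⟨by linarith, hψlt⟩
    have hr : 0 < Real.sqrt ((k1 : ℝ) ^ 2 + (k2 : ℝ) ^ 2) := by
      rcases (Real.sqrt_nonneg ((k1 : ℝ) ^ 2 + (k2 : ℝ) ^ 2)).lt_or_eq with h | h
      · exact h
      · exfalso; rw [hs, ← h, div_zero] at hsin; linarith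
    have hk2 : (0 : ℝ) < (k2 : ℝ) := by
      have h := hsin; rw [hs] at h
      exact ((div_pos_iff.1 h).resolve_right (by rintro ⟨_, h2⟩; linarith)).1
    have hk1 : (0 : ℝ) < (k1 : ℝ) := by
      have h := hcos; rw [hc] at h
      exact ((div_pos_iff.1 h).resolve_right (by rintro ⟨_, h2⟩; linarith)).1
    have htan : Real.tan ψ = (k2 : ℝ) / (k1 : ℝ) := by
      rw [Real.tan_eq_sin_div_cos, hs, hc]
      field_simp
    have htanlt : Real.tan ψ < 1 / n := by
      have h : Real.tan ψ < Real.tan g :=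
        Real.tan_lt_tan_of_nonneg_of_lt_pi_div_two hψ0.le
          (lt_of_le_of_lt hg_le (by linarith [Real.pi_pos])) hψg
      rwa [hg, Real.tan_arctan] at h
    rw [htan, div_lt_div_iff₀ hk1 hn0, one_mul] at htanlt
    have hk1Z : (0 : ℤ) < k1 := by exact_mod_cast hk1
    have hk2Z : (0 : ℤ) < k2 := by exact_mod_cast hk2
    have htanZ : k2 * (n : ℤ) < k1 := by exact_mod_cast htanlt
    have hk1n : k1 ≤ (n : ℤ) := by
      have h1 : |k1| ≤ (n : ℤ) := hm ▸ le_max_left _ _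
      exact (le_abs_self k1).trans h1
    have hnk : (n : ℤ) ≤ k2 * n := le_mul_of_one_le_left (by positivity) hk2Z
    omega
  · -- part (ii)
    intro a b hab
    by_contra hcon
    push_neg at hcon
    obtain ⟨ψ, hψD, h1, h2⟩ := hB (a + (b - a - g) / 2)
    have h : ψ ∈ Set.Ioo a b ∩ D := ⟨⟨by linarith, by linarith⟩, hψD⟩
    rw [hab] at h
    exact h
  · -- part (iii)
    have h1 : g < Real.tan g := Real.lt_tan hg_pos (hg ▸ Real.arctan_lt_pi_div_two _)
    have h2 : Real.tan g = 1 / n := by rw [hg, Real.tan_arctan]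
    linarith
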